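/- Let d ≥ 1, let Δ ⊆ ℝ^d be a reflexive polytope, and let Δ = Δ_1 + … + Δ_r be a nef partition: each Δ_i is a lattice polytope containing 0, and Δ_i ∩ Δ_j = {0} for i ≠ j. For each i let E_i be the set of extreme points e of Δ* with min_{x ∈ Δ_i} ⟨x, e⟩ = -1, and let ∇_i be the convex hull of E_i ∪ {0}. Then ∇ = ∇_1 + … + ∇_r is a reflexive polytope in ℝ^d and ∇_i ∩ ∇_j = {0} for all i ≠ j; that is, {∇_1, …, ∇_r} is a nef partition of ∇. -/

import Mathlib

open Pointwise

/-- The standard inner product on `ℝ^d`. -/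
def dotp {d : ℕ} (x y : Fin d → ℝ) : ℝ := ∑ i, x i * y i

/-- A point of `ℝ^d` with integer coordinates (a lattice point of `ℤ^d`). -/
def IsLatticePt {d : ℕ} (x : Fin d → ℝ) : Prop := ∀ i, ∃ n : ℤ, x i = (n : ℝ)

/-- A lattice polytope: the convex hull of a finite set of lattice points. -/
def IsLatticePolytope {d : ℕ} (P : Set (Fin d → ℝ)) : Prop :=
  ∃ S : Finset (Fin d → ℝ), (∀ x ∈ S, IsLatticePt x) ∧ P = convexHull ℝ (S : Set (Fin d → ℝ))

/-- The dual set `A* = {x : ⟨y,x⟩ ≥ -1 ∀ y ∈ A}`. -/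
def dualSet {d : ℕ} (A : Set (Fin d → ℝ)) : Set (Fin d → ℝ) :=
  {x | ∀ y ∈ A, -1 ≤ dotp y x}

/-- A reflexive polytope: a lattice polytope with `0` in its interior whose dual is
also a lattice polytope. -/
def IsReflexivePolytope {d : ℕ} (P : Set (Fin d → ℝ)) : Prop :=
  IsLatticePolytope P ∧ (0 : Fin d → ℝ) ∈ interior P ∧ IsLatticePolytope (dualSet P)

/-- The minimum (infimum) of `⟨x, z⟩` over `x ∈ A`. -/
noncomputable def minDot {d : ℕ} (A : Set (Fin d → ℝ)) (z : Fin d → ℝ) : ℝ :=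
  sInf ((fun x => dotp x z) '' A)

section H
variable {d : ℕ}

lemma dotp_comm (x y : Fin d → ℝ) : dotp x y = dotp y x := by
  unfold dotp; exact Finset.sum_congr rfl fun i _ => mul_comm _ _

lemma dotp_add_left (x y z : Fin d → ℝ) : dotp (x + y) z = dotp x z + dotp y z := by
  unfold dotp; rw [← Finset.sum_add_distrib]
  exact Finset.sum_congr rfl fun i _ => by simp [add_mul]

lemma dotp_smul_left (c : ℝ) (x z : Fin d → ℝ) : dotp (c • x) z = c * dotp x z := by
  unfold dotp; rw [Finset.mul_sum]
  exact Finset.sum_congr rfl fun i _ => by simp [mul_assoc]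

lemma dotp_zero_left (z : Fin d → ℝ) : dotp 0 z = 0 := by
  unfold dotp; simp

lemma dotp_zero_right (x : Fin d → ℝ) : dotp x 0 = 0 := by
  rw [dotp_comm]; exact dotp_zero_left x

lemma dotp_smul_right (c : ℝ) (x z : Fin d → ℝ) : dotp x (c • z) = c * dotp x z := by
  rw [dotp_comm, dotp_smul_left, dotp_comm]

lemma dotp_sum_left {ι : Type*} (s : Finset ι) (f : ι → (Fin d → ℝ)) (z : Fin d → ℝ) :
    dotp (∑ i ∈ s, f i) z = ∑ i ∈ s, dotp (f i) z := by
  classical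
  induction s using Finset.induction_on with
  | empty => simp [dotp_zero_left]
  | @insert a s' h ih => rw [Finset.sum_insert h, Finset.sum_insert h, dotp_add_left, ih]

lemma dotp_sum_right {ι : Type*} (s : Finset ι) (f : ι → (Fin d → ℝ)) (z : Fin d → ℝ) :
    dotp z (∑ i ∈ s, f i) = ∑ i ∈ s, dotp z (f i) := by
  rw [dotp_comm, dotp_sum_left]
  exact Finset.sum_congr rfl fun i _ => dotp_comm _ _

lemma dotp_self_pos {z : Fin d → ℝ} (hz : z ≠ 0) : 0 < dotp z z := by
  obtain ⟨i, hi⟩ : ∃ i, z i ≠ 0 := by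
    by_contra h; push_neg at h; exact hz (funext h)
  unfold dotp
  exact Finset.sum_pos' (fun j _ => mul_self_nonneg _)
    ⟨i, Finset.mem_univ i, mul_self_pos.mpr hi⟩

lemma isLatticePt_zero : IsLatticePt (0 : Fin d → ℝ) := fun i => ⟨0, by simp⟩

lemma isLatticePt_add {x y : Fin d → ℝ} (hx : IsLatticePt x) (hy : IsLatticePt y) :
    IsLatticePt (x + y) := by
  intro i
  obtain ⟨n, hn⟩ := hx i; obtain ⟨m, hm⟩ := hy i
  exact ⟨n + m, by simp [hn, hm]⟩

lemma dotp_int {x y : Fin d → ℝ} (hx : IsLatticePt x) (hy : IsLatticePt y) :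
    ∃ n : ℤ, dotp x y = (n : ℝ) := by
  choose nx hnx using hx
  choose ny hny using hy
  refine ⟨∑ i, nx i * ny i, ?_⟩
  unfold dotp; push_cast
  exact Finset.sum_congr rfl fun i _ => by rw [hnx i, hny i]

lemma hull_le {S : Set (Fin d → ℝ)} {z : Fin d → ℝ} {c : ℝ} (h : ∀ s ∈ S, c ≤ dotp s z)
    {x : Fin d → ℝ} (hx : x ∈ convexHull ℝ S) : c ≤ dotp x z := by
  have hconv : Convex ℝ {w : Fin d → ℝ | c ≤ dotp w z} := by
    intro a ha b hb s t hs ht hst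
    simp only [Set.mem_setOf_eq] at *
    have : dotp (s • a + t • b) z = s * dotp a z + t * dotp b z := by
      rw [dotp_add_left, dotp_smul_left, dotp_smul_left]
    rw [this]
    calc c = s * c + t * c := by rw [← add_mul, hst, one_mul]
    _ ≤ s * dotp a z + t * dotp b z := add_le_add (mul_le_mul_of_nonneg_left ha hs) (mul_le_mul_of_nonneg_left hb ht)
  exact convexHull_min h hconv hx

lemma minDot_finset (S : Finset (Fin d → ℝ)) (hS : S.Nonempty) (z : Fin d → ℝ) :
    (∃ s ∈ S, dotp s z = minDot (convexHull ℝ (S : Set (Fin d → ℝ))) z) ∧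
    ∀ x ∈ convexHull ℝ (S : Set (Fin d → ℝ)), minDot (convexHull ℝ (S : Set (Fin d → ℝ))) z ≤ dotp x z := by
  obtain ⟨s, hs, hmin⟩ := S.exists_min_image (fun s => dotp s z) hS
  have hlb : ∀ x ∈ convexHull ℝ (S : Set (Fin d → ℝ)), dotp s z ≤ dotp x z := fun x hx =>
    hull_le (fun t ht => hmin t ht) hx
  have heq : minDot (convexHull ℝ (S : Set (Fin d → ℝ))) z = dotp s z := by
    unfold minDot
    apply le_antisymm
    · exact csInf_le ⟨dotp s z, by rintro _ ⟨x, hx, rfl⟩; exact hlb x hx⟩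
        ⟨s, subset_convexHull ℝ _ hs, rfl⟩
    · exact le_csInf ⟨dotp s z, s, subset_convexHull ℝ _ hs, rfl⟩
        (by rintro _ ⟨x, hx, rfl⟩; exact hlb x hx)
  exact ⟨⟨s, hs, heq.symm⟩, heq ▸ hlb⟩

lemma convex_dualSet (A : Set (Fin d → ℝ)) : Convex ℝ (dualSet A) := by
  intro a ha b hb s t hs ht hst
  intro y hy
  have : dotp y (s • a + t • b) = s * dotp y a + t * dotp y b := by
    rw [dotp_comm, dotp_add_left, dotp_smul_left, dotp_smul_left, dotp_comm a, dotp_comm b]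
  rw [this]
  calc (-1 : ℝ) = s * (-1) + t * (-1) := by rw [← add_mul, hst]; ring
  _ ≤ s * dotp y a + t * dotp y b := add_le_add (mul_le_mul_of_nonneg_left (ha y hy) hs) (mul_le_mul_of_nonneg_left (hb y hy) ht)

end H
section H2
variable {d : ℕ}

lemma eq_zero_of_dotp_nonneg {A : Set (Fin d → ℝ)} {z : Fin d → ℝ}
    (hA : (0 : Fin d → ℝ) ∈ interior A) (h : ∀ x ∈ A, 0 ≤ dotp x z) : z = 0 := by
  by_contra hz
  obtain ⟨ε, hε, hball⟩ := Metric.mem_nhds_iff.mp (mem_interior_iff_mem_nhds.mp hA)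
  set c : ℝ := ε / (2 * (‖z‖ + 1)) with hc
  have hnorm : 0 < ‖z‖ + 1 := by positivity
  have hcpos : 0 < c := by positivity
  have hmem : -(c • z) ∈ A := by
    apply hball
    rw [Metric.mem_ball, dist_zero_right, norm_neg, norm_smul, Real.norm_eq_abs,
      abs_of_pos hcpos]
    calc c * ‖z‖ ≤ c * (‖z‖ + 1) := by nlinarith
    _ = ε / 2 := by rw [hc]; field_simp
    _ < ε := by linarith
  have := h _ hmem
  have hneg : dotp (-(c • z)) z = -(c * dotp z z) := by
    have : -(c • z) = (-c) • z := by rw [neg_smul]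
    rw [this, dotp_smul_left]; ring
  rw [hneg] at this
  have := dotp_self_pos hz
  nlinarith

lemma not_extremePoint_zero {A : Set (Fin d → ℝ)} (hd : 1 ≤ d)
    (hA : (0 : Fin d → ℝ) ∈ interior A) : (0 : Fin d → ℝ) ∉ Set.extremePoints ℝ A := by
  obtain ⟨ε, hε, hball⟩ := Metric.mem_nhds_iff.mp (mem_interior_iff_mem_nhds.mp hA)
  set u : Fin d → ℝ := fun i => if i = ⟨0, hd⟩ then ε / 2 else 0 with hu
  have hune : u ≠ 0 := by
    intro h
    have := congrFun h ⟨0, hd⟩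
    simp only [hu, if_pos rfl] at this
    exact (by linarith : ε / 2 ≠ 0) this
  have hunorm : ‖u‖ < ε := by
    rw [show ε = ε / 2 + ε / 2 by ring]
    calc ‖u‖ ≤ ε / 2 := by
          apply pi_norm_le_iff_of_nonneg (by positivity) |>.mpr
          intro i
          rw [hu]; dsimp only
          split <;> simp [Real.norm_eq_abs, abs_of_nonneg, le_of_lt hε, abs_of_pos]
          positivity
    _ < ε / 2 + ε / 2 := by linarith
  have humem : u ∈ A := hball (by rwa [Metric.mem_ball, dist_zero_right])
  have hnumem : -u ∈ A := hball (by rwa [Metric.mem_ball, dist_zero_right, norm_neg])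
  intro hext
  obtain ⟨-, hkey⟩ := hext
  have h0 : (0 : Fin d → ℝ) ∈ openSegment ℝ u (-u) := by
    refine ⟨1/2, 1/2, by norm_num, by norm_num, by norm_num, ?_⟩
    rw [smul_neg, ← sub_eq_add_neg, sub_self]
  exact hune (hkey humem hnumem h0)

lemma zero_mem_interior_dualSet {S : Finset (Fin d → ℝ)} :
    (0 : Fin d → ℝ) ∈ interior (dualSet (convexHull ℝ (S : Set (Fin d → ℝ)))) := by
  classical
  set R : ℝ := 1 + ∑ s ∈ S, ∑ i, |s i| with hR
  have hRpos : (0 : ℝ) < R := by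
    rw [hR]
    have : (0:ℝ) ≤ ∑ s ∈ S, ∑ i, |s i| :=
      Finset.sum_nonneg fun s _ => Finset.sum_nonneg fun i _ => abs_nonneg _
    linarith
  rw [mem_interior_iff_mem_nhds, Metric.mem_nhds_iff]
  refine ⟨1 / R, by positivity, ?_⟩
  intro x hx
  rw [Metric.mem_ball, dist_zero_right] at hx
  intro y hy
  have hkey : ∀ s ∈ (S : Set (Fin d → ℝ)), -(R * ‖x‖) ≤ dotp s x := by
    intro s hs
    have habs : |dotp s x| ≤ R * ‖x‖ := by
      calc |dotp s x| ≤ ∑ i, |s i * x i| := Finset.abs_sum_le_sum_abs _ _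
      _ ≤ ∑ i, |s i| * ‖x‖ := by
          apply Finset.sum_le_sum
          intro i _
          rw [abs_mul]
          exact mul_le_mul_of_nonneg_left (by
            have := norm_le_pi_norm x i
            rwa [Real.norm_eq_abs] at this) (abs_nonneg _)
      _ = (∑ i, |s i|) * ‖x‖ := by rw [Finset.sum_mul]
      _ ≤ R * ‖x‖ := by
          apply mul_le_mul_of_nonneg_right _ (norm_nonneg _)
          rw [hR]
          have h1 : ∑ i, |s i| ≤ ∑ t ∈ S, ∑ i, |t i| := by
            exact Finset.single_le_sum (f := fun t => ∑ i, |t i|)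
              (fun t _ => Finset.sum_nonneg fun i _ => abs_nonneg _) (Finset.mem_coe.mp hs)
          linarith
    linarith [neg_abs_le (dotp s x)]
  have := hull_le hkey hy
  have hlt : R * ‖x‖ < 1 := by
    calc R * ‖x‖ < R * (1 / R) := by
          rcases eq_or_lt_of_le (norm_nonneg x) with h | h
          · rw [← h, mul_zero]; positivity
          · exact mul_lt_mul_of_pos_left hx hRpos
    _ = 1 := by field_simp
  linarith

end H2
section H3
variable {d : ℕ}

lemma face_hull (V : Finset (Fin d → ℝ)) (v : Fin d → ℝ)
    (hb : ∀ s ∈ V, -1 ≤ dotp v s) {w : Fin d → ℝ}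
    (hw : w ∈ convexHull ℝ (V : Set (Fin d → ℝ))) (hw1 : dotp v w = -1) :
    w ∈ convexHull ℝ ((V.filter (fun s => dotp v s = -1) : Finset (Fin d → ℝ)) :
      Set (Fin d → ℝ)) := by
  classical
  rw [Finset.convexHull_eq] at hw
  obtain ⟨t, ht0, ht1, hcm⟩ := hw
  rw [V.centerMass_eq_of_sum_1 id ht1] at hcm
  simp only [id_eq] at hcm
  have hexp : dotp v w = ∑ s ∈ V, t s * dotp v s := by
    rw [← hcm, dotp_sum_right]
    exact Finset.sum_congr rfl fun s _ => by simp [dotp_smul_right]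
  have hzero : ∑ s ∈ V, t s * (dotp v s + 1) = 0 := by
    have : ∑ s ∈ V, t s * (dotp v s + 1) = (∑ s ∈ V, t s * dotp v s) + ∑ s ∈ V, t s := by
      rw [← Finset.sum_add_distrib]; exact Finset.sum_congr rfl fun s _ => by ring
    rw [this, ← hexp, hw1, ht1]; ring
  have hforced : ∀ s ∈ V, t s * (dotp v s + 1) = 0 := by
    refine (Finset.sum_eq_zero_iff_of_nonneg ?_).mp hzero
    intro s hs
    have h1 := ht0 s hs
    have h2 := hb s hs
    nlinarith
  have hcases : ∀ s ∈ V, t s = 0 ∨ dotp v s = -1 := by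
    intro s hs
    rcases mul_eq_zero.mp (hforced s hs) with h | h
    · exact Or.inl h
    · exact Or.inr (by linarith)
  set F := V.filter (fun s => dotp v s = -1) with hF
  have hsum1 : ∑ s ∈ F, t s = 1 := by
    rw [← ht1, hF]
    apply Finset.sum_filter_of_ne
    intro s hs hts
    rcases hcases s hs with h | h
    · exact absurd h hts
    · exact h
  have hsumw : ∑ s ∈ F, t s • s = w := by
    rw [← hcm, hF]
    apply Finset.sum_filter_of_ne
    intro s hs hts
    rcases hcases s hs with h | h
    · exact absurd (by rw [h, zero_smul]) hts
    · exact h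
  have hmem := F.centerMass_mem_convexHull (w := t) (z := id)
    (fun s hs => ht0 s (Finset.mem_of_mem_filter s hs))
    (by rw [hsum1]; norm_num) (fun s hs => Finset.mem_coe.mpr hs)
  rw [Finset.centerMass_eq_of_sum_1 F id hsum1] at hmem
  simp only [id_eq] at hmem
  rwa [hsumw] at hmem

lemma clm_eq_dotp (f : (Fin d → ℝ) →L[ℝ] ℝ) (y : Fin d → ℝ) :
    f y = dotp y (fun i => f (fun j => if i = j then 1 else 0)) := by
  classical
  conv_lhs => rw [pi_eq_sum_univ y]
  rw [map_sum]
  unfold dotp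
  exact Finset.sum_congr rfl fun i _ => by rw [map_smul, smul_eq_mul]

lemma isLatticePolytope_zero : IsLatticePolytope (0 : Set (Fin d → ℝ)) := by
  refine ⟨{0}, fun x hx => ?_, ?_⟩
  · rw [Finset.mem_singleton] at hx; subst hx; exact isLatticePt_zero
  · rw [Finset.coe_singleton, convexHull_singleton]
    rfl

lemma isLatticePolytope_add {A B : Set (Fin d → ℝ)} (hA : IsLatticePolytope A)
    (hB : IsLatticePolytope B) : IsLatticePolytope (A + B) := by
  classical
  obtain ⟨SA, hSA, rfl⟩ := hA
  obtain ⟨SB, hSB, rfl⟩ := hB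
  refine ⟨SA + SB, ?_, ?_⟩
  · intro x hx
    obtain ⟨a, ha, b, hb, rfl⟩ := Finset.mem_add.mp hx
    exact isLatticePt_add (hSA a ha) (hSB b hb)
  · rw [Finset.coe_add, convexHull_add]

lemma isLatticePolytope_sum {r : ℕ} (A : Fin r → Set (Fin d → ℝ))
    (h : ∀ i, IsLatticePolytope (A i)) : IsLatticePolytope (∑ i, A i) := by
  classical
  induction (Finset.univ : Finset (Fin r)) using Finset.induction_on with
  | empty => rw [Finset.sum_empty]; exact isLatticePolytope_zero
  | @insert a s ha ih =>
    rw [Finset.sum_insert ha]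
    exact isLatticePolytope_add (h a) ih

end H3
section H4
variable {d : ℕ}

lemma extreme_of_minimal {S : Finset (Fin d → ℝ)}
    (hmin : ∀ s ∈ S, s ∉ convexHull ℝ ((S.erase s : Finset (Fin d → ℝ)) : Set (Fin d → ℝ))) :
    (S : Set (Fin d → ℝ)) ⊆ Set.extremePoints ℝ (convexHull ℝ (S : Set (Fin d → ℝ))) := by
  classical
  intro s hsS
  have hsS' : s ∈ S := Finset.mem_coe.mp hsS
  rw [(convex_convexHull ℝ _).mem_extremePoints_iff_mem_diff_convexHull_diff]
  refine ⟨subset_convexHull ℝ _ hsS, ?_⟩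
  -- separate s from convexHull (S.erase s)
  have hclosed : IsClosed (convexHull ℝ ((S.erase s : Finset (Fin d → ℝ)) : Set (Fin d → ℝ))) :=
    (Set.Finite.isCompact_convexHull (𝕜 := ℝ) (Finset.finite_toSet _)).isClosed
  obtain ⟨f, u, hfu, hus⟩ := geometric_hahn_banach_closed_point
    (convex_convexHull ℝ _) hclosed (hmin s hsS')
  -- every point of convexHull S \ {s} has f < f s
  have hkey : (convexHull ℝ (S : Set (Fin d → ℝ))) \ {s} ⊆ {x | f x < f s} := by
    rintro a ⟨ha, has⟩
    simp only [Set.mem_singleton_iff] at has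
    by_cases hne : (S.erase s).Nonempty
    · have hins : (S : Set (Fin d → ℝ)) = insert s ((S.erase s : Finset (Fin d → ℝ)) :
          Set (Fin d → ℝ)) := by
        rw [← Finset.coe_insert, Finset.insert_erase hsS']
      rw [hins, convexHull_insert (Finset.coe_nonempty.mpr hne), mem_convexJoin] at ha
      obtain ⟨s', hs', z, hz, hseg⟩ := ha
      rw [Set.mem_singleton_iff] at hs'
      rw [hs'] at hseg
      obtain ⟨p, q, hp, hq, hpq, hcomb⟩ := hseg
      have hfz : f z < u := hfu z hz
      rcases eq_or_lt_of_le hq with hq0 | hq0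
      · exfalso
        apply has
        rw [← hcomb, ← hq0, zero_smul, add_zero, show p = 1 by linarith, one_smul]
      · have : f a = p * f s + q * f z := by
          rw [← hcomb, map_add, map_smul, map_smul, smul_eq_mul, smul_eq_mul]
        have hfs : f z < f s := lt_trans hfz hus
        simp only [Set.mem_setOf_eq]
        rw [this]
        have hps : p * f s + q * f s = f s := by rw [← add_mul, hpq, one_mul]
        linarith [mul_lt_mul_of_pos_left hfs hq0]
    · rw [Finset.not_nonempty_iff_eq_empty] at hne
      have : S = {s} := by
        apply Finset.eq_singleton_iff_unique_mem.mpr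
        exact ⟨hsS', fun t ht => by
          by_contra hts
          exact Finset.notMem_empty t (hne ▸ Finset.mem_erase.mpr ⟨hts, ht⟩)⟩
      rw [this] at ha
      simp only [Finset.coe_singleton, convexHull_singleton, Set.mem_singleton_iff] at ha
      exact absurd ha has
  intro hcontra
  have hconv : Convex ℝ {x : Fin d → ℝ | f x < f s} :=
    convex_halfSpace_lt ⟨fun a b => f.map_add a b, fun c a => f.map_smul c a⟩ _
  have := convexHull_min hkey hconv hcontra
  simp only [Set.mem_setOf_eq, lt_self_iff_false] at this

lemma hull_eq_hull_extremePoints (S : Finset (Fin d → ℝ)) :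
    convexHull ℝ (S : Set (Fin d → ℝ)) =
      convexHull ℝ (Set.extremePoints ℝ (convexHull ℝ (S : Set (Fin d → ℝ)))) := by
  classical
  induction S using Finset.strongInduction with
  | _ S ih =>
    by_cases hex : ∃ s ∈ S, s ∈ convexHull ℝ ((S.erase s : Finset (Fin d → ℝ)) : Set (Fin d → ℝ))
    · obtain ⟨s, hsS, hs⟩ := hex
      have heq : convexHull ℝ (S : Set (Fin d → ℝ)) =
          convexHull ℝ ((S.erase s : Finset (Fin d → ℝ)) : Set (Fin d → ℝ)) := by
        apply le_antisymm
        · apply convexHull_min _ (convex_convexHull ℝ _)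
          intro t ht
          rcases eq_or_ne t s with rfl | hts
          · exact hs
          · exact subset_convexHull ℝ _ (Finset.mem_coe.mpr
              (Finset.mem_erase.mpr ⟨hts, Finset.mem_coe.mp ht⟩))
        · exact convexHull_mono (by exact_mod_cast Finset.erase_subset s S)
      rw [heq]
      exact ih (S.erase s) (Finset.erase_ssubset hsS)
    · push_neg at hex
      apply le_antisymm
      · exact convexHull_mono (extreme_of_minimal hex)
      · exact convexHull_min extremePoints_subset (convex_convexHull ℝ _)

end H4

/-- the dual of a nef partition is a nef partition of a reflexive
polytope `∇ = ∇_1 + ⋯ + ∇_r` (Remark 3.3, Borisov). -/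
theorem dual_nef_partition_is_nef {d r : ℕ} (hd : 1 ≤ d)
    (Δ : Set (Fin d → ℝ)) (hΔ : IsReflexivePolytope Δ)
    (D : Fin r → Set (Fin d → ℝ)) (hlat : ∀ i, IsLatticePolytope (D i))
    (h0 : ∀ i, (0 : Fin d → ℝ) ∈ D i) (hsum : Δ = ∑ i, D i)
    (hnef : ∀ i j, i ≠ j → D i ∩ D j = {0})
    (E : Fin r → Set (Fin d → ℝ))
    (hE : ∀ i, E i = {e ∈ Set.extremePoints ℝ (dualSet Δ) | minDot (D i) e = -1})
    (N : Fin r → Set (Fin d → ℝ))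
    (hN : ∀ i, N i = convexHull ℝ (E i ∪ {0})) :
    IsReflexivePolytope (∑ i, N i) ∧ ∀ i j, i ≠ j → N i ∩ N j = {0} := by
  classical
  obtain ⟨hΔlat, hΔ0, hΔdual⟩ := hΔ
  obtain ⟨SΔ, hSΔlat, hSΔ⟩ := hΔlat
  obtain ⟨Sdual, hSdual_lat, hSdual⟩ := hΔdual
  choose S hS_lat hSD using hlat
  -- r ≥ 1
  have hr : 0 < r := by
    by_contra hr0
    push_neg at hr0
    interval_cases r
    rw [Finset.univ_eq_empty, Finset.sum_empty] at hsum
    have hone : (fun i : Fin d => if i = ⟨0, hd⟩ then (1:ℝ) else 0) = 0 := by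
      apply eq_zero_of_dotp_nonneg (hsum ▸ hΔ0)
      intro x hx
      have : x = 0 := hx
      rw [this, dotp_zero_left]
    have := congrFun hone ⟨0, hd⟩
    simp at this
  haveI : Nonempty (Fin r) := ⟨⟨0, hr⟩⟩
  have hSne : ∀ i, (S i).Nonempty := by
    intro i
    rcases Finset.eq_empty_or_nonempty (S i) with h | h
    · exfalso
      have := h0 i
      rw [hSD i, h, Finset.coe_empty, convexHull_empty] at this
      exact this
    · exact h
  have hDsubΔ : ∀ k, D k ⊆ Δ := by
    intro k x hx
    rw [hsum, Set.mem_fintype_sum]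
    refine ⟨fun i => if i = k then x else 0, fun i => ?_, ?_⟩
    · dsimp only
      by_cases h : i = k
      · rw [if_pos h, h]; exact hx
      · rw [if_neg h]; exact h0 i
    · simp
  have hmin : ∀ i (z : Fin d → ℝ), (∃ s ∈ S i, dotp s z = minDot (D i) z) ∧
      ∀ x ∈ D i, minDot (D i) z ≤ dotp x z := by
    intro i z
    rw [hSD i]
    exact minDot_finset (S i) (hSne i) z
  have hVmem : ∀ q ∈ Set.extremePoints ℝ (dualSet Δ), q ∈ Sdual := by
    intro q hq
    rw [hSdual] at hq
    exact Finset.mem_coe.mp (extremePoints_convexHull_subset hq)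
  have hdual0 : (0 : Fin d → ℝ) ∈ interior (dualSet Δ) := by
    rw [hSΔ]; exact zero_mem_interior_dualSet
  -- the key dichotomy for extreme points of the dual
  have KEY : ∀ q ∈ Set.extremePoints ℝ (dualSet Δ),
      ∃ k, minDot (D k) q = -1 ∧ ∀ j, j ≠ k → minDot (D j) q = 0 := by
    intro q hq
    have hqdual : q ∈ dualSet Δ := extremePoints_subset hq
    have hqlat : IsLatticePt q := hSdual_lat q (hVmem q hq)
    have hm01 : ∀ j, minDot (D j) q = 0 ∨ minDot (D j) q = -1 := by
      intro j
      obtain ⟨⟨s, hsS, hs⟩, hlb⟩ := hmin j q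
      have hint : ∃ n : ℤ, minDot (D j) q = (n : ℝ) := by
        rw [← hs]; exact dotp_int (hS_lat j s hsS) hqlat
      have hle0 : minDot (D j) q ≤ 0 := by
        have := hlb 0 (h0 j); rwa [dotp_zero_left] at this
      have hgem1 : -1 ≤ minDot (D j) q := by
        rw [← hs]
        exact hqdual s (hDsubΔ j (by rw [hSD j]; exact subset_convexHull ℝ _ hsS))
      obtain ⟨n, hn⟩ := hint
      rw [hn] at hle0 hgem1 ⊢
      have hn0 : n ≤ 0 := by exact_mod_cast hle0
      have hn1 : -1 ≤ n := by exact_mod_cast hgem1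
      have : n = 0 ∨ n = -1 := by omega
      rcases this with h | h <;> rw [h] <;> simp
    choose xm hxmS hxm using fun j => (hmin j q).1
    have hxmD : ∀ j, xm j ∈ D j := fun j => by
      rw [hSD j]; exact subset_convexHull ℝ _ (hxmS j)
    have hsum_ge : -1 ≤ ∑ j, minDot (D j) q := by
      have hv : ∑ j, xm j ∈ Δ := by
        rw [hsum, Set.mem_fintype_sum]
        exact ⟨xm, hxmD, rfl⟩
      have h1 := hqdual _ hv
      rw [dotp_sum_left] at h1
      calc (-1 : ℝ) ≤ ∑ j, dotp (xm j) q := h1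
      _ = ∑ j, minDot (D j) q := Finset.sum_congr rfl fun j _ => hxm j
    by_cases hall : ∀ j, minDot (D j) q = 0
    · exfalso
      have hq0 : q = 0 := by
        apply eq_zero_of_dotp_nonneg hΔ0
        intro x hx
        rw [hsum, Set.mem_fintype_sum] at hx
        obtain ⟨g, hg, rfl⟩ := hx
        rw [dotp_sum_left]
        apply Finset.sum_nonneg
        intro j _
        have := (hmin j q).2 (g j) (hg j)
        rw [hall j] at this
        exact this
      rw [hq0] at hq
      exact not_extremePoint_zero hd hdual0 hq
    · push_neg at hall
      obtain ⟨k, hk⟩ := hall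
      have hkm1 : minDot (D k) q = -1 := (hm01 k).resolve_left hk
      refine ⟨k, hkm1, ?_⟩
      intro j hjk
      by_contra hj
      have hjm1 : minDot (D j) q = -1 := (hm01 j).resolve_left hj
      have hneg : ∑ i ∈ ({j, k} : Finset (Fin r)), (fun i => -minDot (D i) q) i ≤
          ∑ i, (fun i => -minDot (D i) q) i := by
        apply Finset.sum_le_sum_of_subset_of_nonneg (Finset.subset_univ _)
        intro i _ _
        rcases hm01 i with h | h <;> rw [h] <;> norm_num
      rw [Finset.sum_pair hjk] at hneg
      simp only [hjm1, hkm1] at hneg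
      rw [Finset.sum_neg_distrib] at hneg
      linarith [hsum_ge]
  have hEsub : ∀ k, E k ⊆ Set.extremePoints ℝ (dualSet Δ) := fun k => by
    rw [hE k]; exact Set.sep_subset _ _
  -- extreme point finset
  set VF : Finset (Fin d → ℝ) := Sdual.filter (fun s => s ∈ Set.extremePoints ℝ (dualSet Δ))
    with hVFdef
  have hVF : (VF : Set (Fin d → ℝ)) = Set.extremePoints ℝ (dualSet Δ) := by
    ext s
    simp only [hVFdef, Finset.coe_filter, Set.mem_setOf_eq]
    exact ⟨fun h => h.2, fun h => ⟨hVmem s h, h⟩⟩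
  have hVFdual : ∀ s ∈ VF, s ∈ dualSet Δ := by
    intro s hs
    have : s ∈ (VF : Set (Fin d → ℝ)) := Finset.mem_coe.mpr hs
    rw [hVF] at this
    exact extremePoints_subset this
  have hKM : dualSet Δ = convexHull ℝ (VF : Set (Fin d → ℝ)) := by
    have h1 : dualSet Δ = convexHull ℝ (Set.extremePoints ℝ (dualSet Δ)) := by
      conv_lhs => rw [hSdual]
      rw [hull_eq_hull_extremePoints Sdual, ← hSdual]
    rw [h1, hVF]
  have hN0mem : ∀ i, (0 : Fin d → ℝ) ∈ N i := by
    intro i; rw [hN i]; exact subset_convexHull ℝ _ (Or.inr rfl)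
  -- THE KEY INCLUSION (dagger)
  have dagger : ∀ z : Fin d → ℝ, (∀ k, ∀ y ∈ D k, -1 ≤ dotp y z) → z ∈ ∑ i, N i := by
    intro z hz
    choose xm hxmS hxm using fun j => (hmin j z).1
    have hxmD : ∀ j, xm j ∈ D j := fun j => by
      rw [hSD j]; exact subset_convexHull ℝ _ (hxmS j)
    set mval := ∑ j, dotp (xm j) z with hmval
    have hlbΔ : ∀ p ∈ Δ, mval ≤ dotp p z := by
      intro p hp
      rw [hsum, Set.mem_fintype_sum] at hp
      obtain ⟨g, hg, rfl⟩ := hp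
      rw [dotp_sum_left, hmval]
      apply Finset.sum_le_sum
      intro j _
      rw [hxm j]
      exact (hmin j z).2 (g j) (hg j)
    by_cases hm : 0 ≤ mval
    · have hz0 : z = 0 := eq_zero_of_dotp_nonneg hΔ0 (fun x hx => le_trans hm (hlbΔ x hx))
      rw [hz0, Set.mem_fintype_sum]
      exact ⟨fun _ => 0, fun i => hN0mem i, by simp⟩
    · push_neg at hm
      set lam := -mval with hlam
      have hlampos : 0 < lam := by rw [hlam]; linarith
      set w := lam⁻¹ • z with hw
      have hzw : z = lam • w := by
        rw [hw, smul_smul, mul_inv_cancel₀ (ne_of_gt hlampos), one_smul]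
      have hdotw : ∀ p : Fin d → ℝ, dotp p w = lam⁻¹ * dotp p z := fun p => by
        rw [hw, dotp_smul_right]
      have hlaminv : lam⁻¹ * mval = -1 := by
        rw [hlam]
        field_simp
        rw [div_self hm.ne]
      have hwdual : w ∈ dualSet Δ := by
        intro y hy
        rw [hdotw]
        have h1 : lam⁻¹ * mval ≤ lam⁻¹ * dotp y z :=
          mul_le_mul_of_nonneg_left (hlbΔ y hy) (inv_nonneg.mpr hlampos.le)
        linarith [hlaminv]
      set v := ∑ j, xm j with hv
      have hvΔ : v ∈ Δ := by
        rw [hsum, Set.mem_fintype_sum]; exact ⟨xm, hxmD, rfl⟩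
      have hvw : dotp v w = -1 := by
        rw [hv, dotp_sum_left]
        have : ∑ j, dotp (xm j) w = lam⁻¹ * mval := by
          rw [hmval, Finset.mul_sum]
          exact Finset.sum_congr rfl fun j _ => hdotw _
        rw [this, hlaminv]
      have hbV : ∀ s ∈ VF, -1 ≤ dotp v s := fun s hs => hVFdual s hs v hvΔ
      have hwVF : w ∈ convexHull ℝ (VF : Set (Fin d → ℝ)) := by rw [← hKM]; exact hwdual
      have hface := face_hull VF v hbV hwVF hvw
      set FF := VF.filter (fun s => dotp v s = -1) with hFFdef
      rw [Finset.convexHull_eq] at hface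
      obtain ⟨t, ht0, ht1, hcm⟩ := hface
      rw [FF.centerMass_eq_of_sum_1 id ht1] at hcm
      simp only [id_eq] at hcm
      -- each s in FF is extreme, get its unique index
      have hFFext : ∀ s ∈ FF, s ∈ Set.extremePoints ℝ (dualSet Δ) := by
        intro s hs
        have : s ∈ (VF : Set (Fin d → ℝ)) := Finset.mem_coe.mpr (Finset.mem_of_mem_filter s hs)
        rwa [hVF] at this
      have hsKEY : ∀ s, s ∈ FF → ∃ k, minDot (D k) s = -1 ∧ ∀ j, j ≠ k → minDot (D j) s = 0 :=
        fun s hs => KEY s (hFFext s hs)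
      choose! κ hκ1 hκ2 using hsKEY
      have hforce : ∀ s ∈ FF, ∀ j, dotp (xm j) s = if j = κ s then -1 else 0 := by
        intro s hs j
        have hsvm1 : dotp v s = -1 := by
          have := (Finset.mem_filter.mp hs).2
          exact this
        have hge : ∀ i ∈ Finset.univ, (if i = κ s then (-1:ℝ) else 0) ≤ dotp (xm i) s := by
          intro i _
          have hmi := (hmin i s).2 (xm i) (hxmD i)
          by_cases h : i = κ s
          · rw [if_pos h, h]
            rw [h] at hmi
            rw [hκ1 s hs] at hmi
            exact hmi
          · rw [if_neg h]
            rw [hκ2 s hs i h] at hmi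
            exact hmi
        have hsl : ∑ i, dotp (xm i) s = -1 := by rw [← dotp_sum_left, ← hv, hsvm1]
        have hsr : ∑ i, (if i = κ s then (-1:ℝ) else 0) = -1 := by simp
        have heq := (Finset.sum_eq_sum_iff_of_le hge).mp (by rw [hsl, hsr])
        exact (heq j (Finset.mem_univ j)).symm
      set zk : Fin r → (Fin d → ℝ) :=
        fun k => ∑ s ∈ FF.filter (fun s => κ s = k), (lam * t s) • s with hzkdef
      have hzsum : ∑ k, zk k = z := by
        have h1 : ∑ k, zk k = ∑ s ∈ FF, (lam * t s) • s := by
          simp only [hzkdef]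
          exact Finset.sum_fiberwise FF κ (fun s => (lam * t s) • s)
        rw [h1, hzw, ← hcm, Finset.smul_sum]
        exact Finset.sum_congr rfl fun s _ => by rw [smul_smul]
      have hzkmem : ∀ k, zk k ∈ N k := by
        intro k
        set G := FF.filter (fun s => κ s = k) with hGdef
        have hGnn : ∀ x ∈ G, 0 ≤ t x := fun x hx => ht0 x (Finset.mem_of_mem_filter x hx)
        set σ := lam * ∑ s ∈ G, t s with hσdef
        have hσ0 : 0 ≤ σ := mul_nonneg hlampos.le (Finset.sum_nonneg hGnn)
        have hσsum : ∑ s ∈ G, lam * t s = σ := by rw [hσdef, Finset.mul_sum]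
        have hzkG : zk k = ∑ s ∈ G, (lam * t s) • s := by
          simp only [hzkdef, hGdef]
        have hσ1 : σ ≤ 1 := by
          have h1 : dotp (xm k) w = ∑ s ∈ FF, t s * dotp (xm k) s := by
            rw [← hcm, dotp_sum_right]
            exact Finset.sum_congr rfl fun s _ => by rw [dotp_smul_right]
          have h2 : ∑ s ∈ FF, t s * dotp (xm k) s = -(∑ s ∈ G, t s) := by
            have hterm : ∀ s ∈ FF, t s * dotp (xm k) s = if κ s = k then -(t s) else 0 := by
              intro s hs
              rw [hforce s hs k]
              by_cases h : κ s = k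
              · rw [if_pos h.symm, if_pos h]; ring
              · rw [if_neg (fun hh => h hh.symm), if_neg h]; ring
            rw [Finset.sum_congr rfl hterm, ← Finset.sum_filter, ← hGdef,
              Finset.sum_neg_distrib]
          have h3 : dotp (xm k) z = -σ := by
            rw [hzw, dotp_smul_right, h1, h2, hσdef]; ring
          have h4 := hz k (xm k) (hxmD k)
          rw [h3] at h4
          linarith
        have hGsubE : ∀ s ∈ G, (s : Fin d → ℝ) ∈ E k ∪ ({0} : Set (Fin d → ℝ)) := by
          intro s hs
          left
          have hsFF : s ∈ FF := Finset.mem_of_mem_filter s hs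
          have hκs : κ s = k := (Finset.mem_filter.mp hs).2
          rw [hE k]
          refine ⟨hFFext s hsFF, ?_⟩
          rw [← hκs]
          exact hκ1 s hsFF
        rw [hN k]
        by_cases hts : ∑ s ∈ G, t s = 0
        · have hzk0 : zk k = 0 := by
            rw [hzkG]
            apply Finset.sum_eq_zero
            intro s hs
            rw [(Finset.sum_eq_zero_iff_of_nonneg hGnn).mp hts s hs, mul_zero, zero_smul]
          rw [hzk0]
          exact subset_convexHull ℝ _ (Or.inr rfl)
        · have hσpos : 0 < σ := by
            rw [hσdef]
            exact mul_pos hlampos (lt_of_le_of_ne (Finset.sum_nonneg hGnn) (Ne.symm hts))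
          have hcmem := G.centerMass_mem_convexHull (w := fun s => lam * t s) (z := id)
            (fun s hs => mul_nonneg hlampos.le (hGnn s hs))
            (by rw [hσsum]; exact hσpos) (fun s hs => hGsubE s hs)
          have hcm2 : G.centerMass (fun s => lam * t s) id = σ⁻¹ • zk k := by
            rw [Finset.centerMass, hσsum, hzkG]
            simp only [id_eq]
          rw [hcm2] at hcmem
          have hfinal : zk k = σ • (σ⁻¹ • zk k) + (1 - σ) • (0 : Fin d → ℝ) := by
            rw [smul_smul, mul_inv_cancel₀ (ne_of_gt hσpos), one_smul, smul_zero, add_zero]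
          rw [hfinal]
          exact (convex_convexHull ℝ _) hcmem (subset_convexHull ℝ _ (Or.inr rfl)) hσ0
            (by linarith) (by ring)
      rw [Set.mem_fintype_sum]
      exact ⟨zk, hzkmem, hzsum⟩
  -- interior of nabla
  have hNint : (0 : Fin d → ℝ) ∈ interior (∑ i, N i) := by
    have hsub : dualSet Δ ⊆ ∑ i, N i := fun q hq =>
      dagger q (fun k y hy => hq y (hDsubΔ k hy))
    exact interior_mono hsub hdual0
  -- lattice polytope property of each N k
  have hNlat : ∀ k, IsLatticePolytope (N k) := by
    intro k
    refine ⟨insert 0 (Sdual.filter (fun s => s ∈ E k)), ?_, ?_⟩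
    · intro x hx
      rcases Finset.mem_insert.mp hx with rfl | hx
      · exact isLatticePt_zero
      · exact hSdual_lat x (Finset.mem_of_mem_filter x hx)
    · rw [hN k]
      congr 1
      ext x
      simp only [Finset.coe_insert, Set.mem_insert_iff, Finset.coe_filter, Set.mem_setOf_eq,
        Set.mem_union, Set.mem_singleton_iff]
      constructor
      · rintro (h | rfl)
        · exact Or.inr ⟨hVmem x (hEsub k h), h⟩
        · exact Or.inl rfl
      · rintro (rfl | ⟨-, h⟩)
        · exact Or.inr rfl
        · exact Or.inl h
  -- the union polytope
  set CS : Finset (Fin d → ℝ) := Finset.univ.biUnion S with hCSdef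
  have hDC : ∀ k, D k ⊆ convexHull ℝ (CS : Set (Fin d → ℝ)) := by
    intro k
    rw [hSD k]
    apply convexHull_mono
    intro s hs
    exact Finset.mem_coe.mpr (Finset.mem_biUnion.mpr ⟨k, Finset.mem_univ k, Finset.mem_coe.mp hs⟩)
  -- pairing bounds between D k and E j
  have hEpair : ∀ k (y : Fin d → ℝ), y ∈ D k → ∀ j (q : Fin d → ℝ),
      q ∈ E j ∪ ({0} : Set (Fin d → ℝ)) → (if j = k then (-1:ℝ) else 0) ≤ dotp y q := by
    intro k y hy j q hq
    rcases hq with hq | hq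
    · have hqE := hq
      rw [hE j] at hqE
      obtain ⟨hqx, hqm⟩ := hqE
      have hlow := (hmin k q).2 y hy
      by_cases hjk : j = k
      · rw [if_pos hjk]
        subst hjk
        rw [hqm] at hlow
        exact hlow
      · rw [if_neg hjk]
        obtain ⟨k', hk1, hk2⟩ := KEY q hqx
        have hjk' : j = k' := by
          by_contra h
          rw [hk2 j h] at hqm
          norm_num at hqm
        have hkk' : k ≠ k' := fun h => hjk (hjk' ▸ h ▸ rfl)
        rw [hk2 k hkk'] at hlow
        exact hlow
    · rw [Set.mem_singleton_iff] at hq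
      rw [hq, dotp_zero_right]
      split <;> norm_num
  have hDdualN : ∀ k, D k ⊆ dualSet (∑ i, N i) := by
    intro k y hy p hp
    rw [Set.mem_fintype_sum] at hp
    obtain ⟨g, hg, rfl⟩ := hp
    rw [dotp_sum_left]
    have hterm : ∀ j, (if j = k then (-1:ℝ) else 0) ≤ dotp (g j) y := by
      intro j
      have hgj := hg j
      rw [hN j] at hgj
      refine hull_le (fun q hq => ?_) hgj
      have := hEpair k y hy j q hq
      rwa [dotp_comm y q] at this
    calc (-1:ℝ) = ∑ j, (if j = k then (-1:ℝ) else 0) := by simp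
    _ ≤ ∑ j, dotp (g j) y := Finset.sum_le_sum (fun j _ => hterm j)
  have hdualN : dualSet (∑ i, N i) = convexHull ℝ (CS : Set (Fin d → ℝ)) := by
    apply Set.Subset.antisymm
    · intro x hx
      by_contra hxC
      have hC0 : (0 : Fin d → ℝ) ∈ convexHull ℝ (CS : Set (Fin d → ℝ)) :=
        hDC ⟨0, hr⟩ (h0 ⟨0, hr⟩)
      obtain ⟨f, u, hfa, hux⟩ := geometric_hahn_banach_closed_point (convex_convexHull ℝ _)
        ((Set.Finite.isCompact_convexHull (𝕜 := ℝ) (Finset.finite_toSet _)).isClosed) hxC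
      have hu0 : 0 < u := by
        have := hfa 0 hC0
        rwa [map_zero] at this
      set g : Fin d → ℝ := fun i => f (fun j => if i = j then 1 else 0) with hgdef
      have hfg : ∀ y, f y = dotp y g := fun y => clm_eq_dotp f y
      set z' : Fin d → ℝ := (-u⁻¹) • g with hz'def
      have hz'mem : ∀ k, ∀ y ∈ D k, -1 ≤ dotp y z' := by
        intro k y hy
        rw [hz'def, dotp_smul_right, ← hfg y]
        have hfy : f y < u := hfa y (hDC k hy)
        have h1 : -u⁻¹ * u < -u⁻¹ * f y := by
          apply mul_lt_mul_of_neg_left hfy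
          simp only [neg_neg, Left.neg_neg_iff]
          positivity
        have h2 : -u⁻¹ * u = -1 := by field_simp
        linarith
      have hz'N := dagger z' hz'mem
      have hcontra := hx z' hz'N
      rw [hz'def, dotp_smul_left] at hcontra
      have hgx : dotp g x = f x := by rw [hfg x, dotp_comm]
      rw [hgx] at hcontra
      have h1 : -u⁻¹ * f x < -u⁻¹ * u := by
        apply mul_lt_mul_of_neg_left hux
        simp only [Left.neg_neg_iff]
        positivity
      have h2 : -u⁻¹ * u = -1 := by field_simp
      linarith
    · apply convexHull_min _ (convex_dualSet _)
      intro s hs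
      obtain ⟨k, -, hk⟩ := Finset.mem_biUnion.mp (Finset.mem_coe.mp hs)
      exact hDdualN k (by rw [hSD k]; exact subset_convexHull ℝ _ (Finset.mem_coe.mpr hk))
  refine ⟨⟨isLatticePolytope_sum N hNlat, hNint, ?_⟩, ?_⟩
  · rw [hdualN]
    refine ⟨CS, fun x hx => ?_, rfl⟩
    obtain ⟨k, -, hk⟩ := Finset.mem_biUnion.mp hx
    exact hS_lat k x hk
  · intro i j hij
    ext x
    simp only [Set.mem_inter_iff, Set.mem_singleton_iff]
    constructor
    · rintro ⟨hxi, hxj⟩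
      apply eq_zero_of_dotp_nonneg hΔ0
      intro y hy
      rw [hsum, Set.mem_fintype_sum] at hy
      obtain ⟨g, hg, rfl⟩ := hy
      rw [dotp_sum_left]
      apply Finset.sum_nonneg
      intro k _
      have hpair : ∀ i', i' ≠ k → x ∈ N i' → (0:ℝ) ≤ dotp (g k) x := by
        intro i' hik hxN
        rw [hN i'] at hxN
        rw [dotp_comm]
        refine hull_le (fun q hq => ?_) hxN
        have := hEpair k (g k) (hg k) i' q hq
        rw [if_neg hik] at this
        rwa [dotp_comm q]
      by_cases hik : i = k
      · exact hpair j (fun h => hij (by rw [hik, ← h])) hxj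
      · exact hpair i hik hxi
    · rintro rfl
      exact ⟨hN0mem i, hN0mem j⟩
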